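/- Let X be a proper, geodesic metric space with a stably visible compactification X̄. Then for every pair of distinct boundary points ξ, η ∈ ∂X, the pencil P(ξ, η) is non-empty, i.e. there exists a geodesic line γ : ℝ → X with lim_{t→∞} γ(t) = ξ and lim_{t→−∞} γ(t) = η. -/

import Mathlib

open Filter Topology

/-- `f` is a geodesic segment from `u` to `v`, parametrized by arclength on
`[0, d(u,v)]`. -/
def IsGeodesicFrom {X : Type*} [MetricSpace X] (f : ℝ → X) (u v : X) : Prop :=
  f 0 = u ∧ f (dist u v) = v ∧
    ∀ s ∈ Set.Icc (0 : ℝ) (dist u v), ∀ t ∈ Set.Icc (0 : ℝ) (dist u v),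
      dist (f s) (f t) = |s - t|

/-- A metric space is geodesic if any two points are joined by a geodesic segment. -/
def GeodesicSpace (X : Type*) [MetricSpace X] : Prop :=
  ∀ u v : X, ∃ f : ℝ → X, IsGeodesicFrom f u v

/-- A compactification `ι : X → Y` is *stably visible* if every sequence of geodesic
segments whose endpoints converge to two distinct boundary points intersects some
bounded subset of `X`. -/
def StablyVisible {X Y : Type*} [MetricSpace X] [TopologicalSpace Y] (ι : X → Y) : Prop :=
  ∀ ξ η : Y, ξ ∉ Set.range ι → η ∉ Set.range ι → ξ ≠ η →
    ∀ (a b : ℕ → X) (f : ℕ → ℝ → X),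
      (∀ n, IsGeodesicFrom (f n) (a n) (b n)) →
      Tendsto (fun n => ι (a n)) atTop (𝓝 η) →
      Tendsto (fun n => ι (b n)) atTop (𝓝 ξ) →
      ∃ B : Set X, Bornology.IsBounded B ∧
        ∀ n, ∃ t ∈ Set.Icc (0 : ℝ) (dist (a n) (b n)), f n t ∈ B

private lemma escape_aux {X Y : Type*} [MetricSpace X] [ProperSpace X] [TopologicalSpace Y]
    [T2Space Y] {ι : X → Y} (hc : Continuous ι) {ζ : Y} (hζ : ζ ∉ Set.range ι)
    (x₀ : X) {x : ℕ → X} (hx : Tendsto (fun n => ι (x n)) atTop (𝓝 ζ)) :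
    Tendsto (fun n => dist (x n) x₀) atTop atTop := by
  rw [tendsto_atTop]
  by_contra h
  push_neg at h
  obtain ⟨R, hR⟩ := h
  have hR : ∃ᶠ n in atTop, ¬ R ≤ dist (x n) x₀ := hR.mono fun n hn => not_le.mpr hn
  have hfreq : ∃ᶠ n in atTop, x n ∈ Metric.closedBall x₀ R :=
    hR.mono fun n hn => Metric.mem_closedBall.mpr (not_le.mp hn).le
  have hne : (atTop ⊓ 𝓟 {n | x n ∈ Metric.closedBall x₀ R}).NeBot :=
    Filter.frequently_iff_neBot.mp hfreq
  set F := atTop ⊓ 𝓟 {n | x n ∈ Metric.closedBall x₀ R} with hF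
  let 𝒰 : Ultrafilter ℕ := Ultrafilter.of F
  have h𝒰 : (𝒰 : Filter ℕ) ≤ F := Ultrafilter.of_le F
  have hmem : {n | x n ∈ Metric.closedBall x₀ R} ∈ 𝒰 :=
    h𝒰 (inf_le_right (a := (atTop : Filter ℕ)) (mem_principal_self _))
  obtain ⟨p, hp, hlim⟩ := (isCompact_closedBall x₀ R).ultrafilter_le_nhds' (𝒰.map x)
    (by rwa [Ultrafilter.mem_map])
  have hlx : Tendsto x (𝒰 : Filter ℕ) (𝓝 p) := hlim
  have h1 : Tendsto (fun n => ι (x n)) 𝒰 (𝓝 (ι p)) := (hc.tendsto p).comp hlx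
  have h2 : Tendsto (fun n => ι (x n)) 𝒰 (𝓝 ζ) :=
    hx.mono_left (h𝒰.trans inf_le_left)
  exact hζ ⟨p, tendsto_nhds_unique h1 h2⟩

private lemma notin_range_of_escape {X Y : Type*} [MetricSpace X] [TopologicalSpace Y]
    {ι : X → Y} (hemb : IsOpenEmbedding ι) (x₀ : X) {x : ℕ → X} {ζ : Y}
    (hx : Tendsto (fun n => ι (x n)) atTop (𝓝 ζ))
    (hesc : Tendsto (fun n => dist (x n) x₀) atTop atTop) : ζ ∉ Set.range ι := by
  rintro ⟨z, rfl⟩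
  have hxz : Tendsto x atTop (𝓝 z) := hemb.tendsto_nhds_iff.mpr hx
  have hd : Tendsto (fun n => dist (x n) x₀) atTop (𝓝 (dist z x₀)) :=
    (Continuous.dist continuous_id continuous_const).continuousAt.tendsto.comp hxz
  have h1 : ∀ᶠ n in atTop, dist z x₀ + 1 ≤ dist (x n) x₀ := hesc.eventually_ge_atTop _
  have h2 : ∀ᶠ n in atTop, dist (x n) x₀ < dist z x₀ + 1 :=
    hd.eventually_lt_const (by linarith)
  obtain ⟨n, hn1, hn2⟩ := (h1.and h2).exists
  linarith

private lemma tendsto_of_forall_clusterPt {Y : Type*} [TopologicalSpace Y] [CompactSpace Y]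
    {F : Filter Y} [F.NeBot] {ξ : Y} (h : ∀ ζ, ClusterPt ζ F → ζ = ξ) : F ≤ 𝓝 ξ := by
  rw [le_iff_ultrafilter]
  intro 𝒰 h𝒰
  obtain ⟨ζ, -, hζ⟩ := isCompact_univ.ultrafilter_le_nhds 𝒰
    (by simp [le_principal_iff])
  have hcl : ClusterPt ζ F := Filter.NeBot.mono 𝒰.neBot (le_inf hζ h𝒰)
  rwa [h ζ hcl] at hζ

private lemma seq_of_mapClusterPt {Y : Type*} [MetricSpace Y] {f : ℝ → Y} {ζ : Y}
    (h : MapClusterPt ζ atTop f) :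
    ∃ s : ℕ → ℝ, (∀ k : ℕ, (k : ℝ) ≤ s k) ∧ Tendsto (fun k => f (s k)) atTop (𝓝 ζ) := by
  have h' : ∀ k : ℕ, ∃ u, (k : ℝ) ≤ u ∧ dist (f u) ζ < 1 / (k + 1) := by
    intro k
    have h1 : ∃ᶠ u in atTop, f u ∈ Metric.ball ζ (1 / (k + 1)) :=
      mapClusterPt_iff_frequently.mp h (Metric.ball ζ (1 / (k + 1))) (Metric.ball_mem_nhds ζ (by positivity))
    obtain ⟨u, hu1, hu2⟩ := frequently_atTop.mp h1 (k : ℝ)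
    exact ⟨u, hu1, hu2⟩
  choose s hs1 hs2 using h'
  refine ⟨s, hs1, ?_⟩
  rw [tendsto_iff_dist_tendsto_zero]
  exact squeeze_zero (fun k => dist_nonneg) (fun k => (hs2 k).le)
    tendsto_one_div_add_atTop_nhds_zero_nat


private lemma clamp_lipschitz (x y D : ℝ) : |max 0 (min x D) - max 0 (min y D)| ≤ |x - y| := by
  have h1 : |max (min x D) 0 - max (min y D) 0| ≤ |min x D - min y D| :=
    abs_max_sub_max_le_abs _ _ _
  have h2 : |min x D - min y D| ≤ max |x - y| |D - D| := abs_min_sub_min_le_max _ _ _ _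
  rw [sub_self, abs_zero, max_eq_left (abs_nonneg _)] at h2
  rw [max_comm 0 (min x D), max_comm 0 (min y D)]
  exact h1.trans h2

/-- **Non-emptiness of pencils.**  Let `X` be a proper geodesic metric space with a
stably visible compactification `ι : X → Y`.  Then any two distinct boundary points
`ξ ≠ η` are joined by a geodesic line: there is an isometric embedding `γ : ℝ → X`
with `γ(t) → ξ` as `t → ∞` and `γ(t) → η` as `t → −∞`. -/
theorem stmt_5 {X Y : Type*} [MetricSpace X] [ProperSpace X] (hgeo : GeodesicSpace X)
    [TopologicalSpace Y] [T2Space Y] [SecondCountableTopology Y] [CompactSpace Y]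
    (ι : X → Y) (hemb : IsOpenEmbedding ι) (hdense : DenseRange ι)
    (hsv : StablyVisible ι)
    (ξ η : Y) (hξ : ξ ∉ Set.range ι) (hη : η ∉ Set.range ι) (hne : ξ ≠ η) :
    ∃ γ : ℝ → X, Isometry γ ∧
      Tendsto (fun t => ι (γ t)) atTop (𝓝 ξ) ∧
      Tendsto (fun t => ι (γ t)) atBot (𝓝 η) := by
  letI : MetricSpace Y := TopologicalSpace.metrizableSpaceMetric Y
  -- approximating sequences for the two boundary points
  have hηc : η ∈ closure (Set.range ι) := by rw [hdense.closure_eq]; trivial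
  have hξc : ξ ∈ closure (Set.range ι) := by rw [hdense.closure_eq]; trivial
  obtain ⟨ya, hya1, hya2⟩ := mem_closure_iff_seq_limit.mp hηc
  obtain ⟨yb, hyb1, hyb2⟩ := mem_closure_iff_seq_limit.mp hξc
  choose a ha using hya1
  choose b hb using hyb1
  have haT : Tendsto (fun n => ι (a n)) atTop (𝓝 η) := hya2.congr fun n => (ha n).symm
  have hbT : Tendsto (fun n => ι (b n)) atTop (𝓝 ξ) := hyb2.congr fun n => (hb n).symm
  obtain ⟨x₀⟩ : Nonempty X := ⟨a 0⟩
  -- geodesics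
  choose f hf using fun n => hgeo (a n) (b n)
  set d : ℕ → ℝ := fun n => dist (a n) (b n) with hd
  have hdistf : ∀ n, ∀ s ∈ Set.Icc (0:ℝ) (d n), ∀ u ∈ Set.Icc (0:ℝ) (d n),
      dist (f n s) (f n u) = |s - u| := fun n => (hf n).2.2
  have hf0 : ∀ n, f n 0 = a n := fun n => (hf n).1
  have hfd : ∀ n, f n (d n) = b n := fun n => (hf n).2.1
  have hd0 : ∀ n, 0 ≤ d n := fun n => dist_nonneg
  -- stable visibility gives a bounded set through which all geodesics pass
  obtain ⟨B, hBb, hBt⟩ := hsv ξ η hξ hη hne a b f hf haT hbT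
  obtain ⟨C, hC⟩ := hBb.subset_closedBall x₀
  choose t ht1 ht2 using hBt
  have htmem : ∀ n, t n ∈ Set.Icc (0:ℝ) (d n) := ht1
  have htB : ∀ n, dist (f n (t n)) x₀ ≤ C := fun n => hC (ht2 n)
  -- endpoints escape to infinity
  have haesc : Tendsto (fun n => dist (a n) x₀) atTop atTop :=
    escape_aux hemb.continuous hη x₀ haT
  have hbesc : Tendsto (fun n => dist (b n) x₀) atTop atTop :=
    escape_aux hemb.continuous hξ x₀ hbT
  -- hence t n → ∞ and d n - t n → ∞
  have hta : ∀ n, dist (a n) x₀ - C ≤ t n := by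
    intro n
    have h1 : dist (f n 0) (f n (t n)) = |0 - t n| :=
      hdistf n 0 ⟨le_refl _, hd0 n⟩ (t n) (htmem n)
    rw [hf0 n, zero_sub, abs_neg, abs_of_nonneg (htmem n).1] at h1
    have h2 := dist_triangle (a n) (f n (t n)) x₀
    rw [← h1] at *
    linarith [htB n, dist_triangle (a n) (f n (t n)) x₀]
  have htb : ∀ n, dist (b n) x₀ - C ≤ d n - t n := by
    intro n
    have h1 : dist (f n (d n)) (f n (t n)) = |d n - t n| :=
      hdistf n (d n) ⟨hd0 n, le_refl _⟩ (t n) (htmem n)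
    rw [hfd n, abs_of_nonneg (by linarith [(htmem n).2] : (0:ℝ) ≤ d n - t n)] at h1
    have h2 := dist_triangle (b n) (f n (t n)) x₀
    linarith [htB n]
  have htn : Tendsto t atTop atTop :=
    tendsto_atTop_mono hta (tendsto_atTop_add_const_right _ (-C) haesc)
  have hrn : Tendsto (fun n => d n - t n) atTop atTop :=
    tendsto_atTop_mono htb (tendsto_atTop_add_const_right _ (-C) hbesc)
  -- reparametrized (clamped) geodesics
  set g : ℕ → ℝ → X := fun n s => f n (max 0 (min (s + t n) (d n))) with hg
  have hclamp_mem : ∀ n (s : ℝ), max 0 (min (s + t n) (d n)) ∈ Set.Icc (0:ℝ) (d n) :=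
    fun n s => ⟨le_max_left _ _, max_le (hd0 n) (min_le_right _ _)⟩
  have hg0 : ∀ n, g n 0 = f n (t n) := by
    intro n
    simp only [hg, zero_add]
    rw [min_eq_left (htmem n).2, max_eq_right (htmem n).1]
  have hgid : ∀ n (s : ℝ), 0 ≤ s + t n → s + t n ≤ d n → g n s = f n (s + t n) := by
    intro n s h1 h2
    simp only [hg]
    rw [min_eq_left h2, max_eq_right h1]
  have hgball : ∀ n (s : ℝ), g n s ∈ Metric.closedBall x₀ (C + |s|) := by
    intro n s
    have h1 : dist (g n s) (f n (t n)) = |max 0 (min (s + t n) (d n)) - t n| :=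
      hdistf n _ (hclamp_mem n s) (t n) (htmem n)
    have h2 : |max 0 (min (s + t n) (d n)) - t n| ≤ |s| := by
      have h := clamp_lipschitz (s + t n) (t n) (d n)
      rw [min_eq_left (htmem n).2, max_eq_right (htmem n).1, add_sub_cancel_right] at h
      exact h
    have h3 := dist_triangle (g n s) (f n (t n)) x₀
    rw [Metric.mem_closedBall]
    calc dist (g n s) x₀ ≤ dist (g n s) (f n (t n)) + dist (f n (t n)) x₀ := h3
      _ ≤ |s| + C := by rw [h1]; exact add_le_add h2 (htB n)
      _ = C + |s| := add_comm _ _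
  -- ultrafilter limit defines γ
  let 𝒰 : Ultrafilter ℕ := Ultrafilter.of atTop
  have h𝒰 : (𝒰 : Filter ℕ) ≤ atTop := Ultrafilter.of_le _
  have hγex : ∀ s : ℝ, ∃ p, p ∈ Metric.closedBall x₀ (C + |s|) ∧
      Tendsto (fun n => g n s) (𝒰 : Filter ℕ) (𝓝 p) := by
    intro s
    obtain ⟨p, hp, hl⟩ := (isCompact_closedBall x₀ (C + |s|)).ultrafilter_le_nhds'
      (𝒰.map (fun n => g n s))
      (by rw [Ultrafilter.mem_map]; exact Filter.univ_mem' fun n => hgball n s)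
    exact ⟨p, hp, hl⟩
  choose γ hγball hγ using hγex
  -- eventual identity of parameters
  have hev : ∀ s u : ℝ, ∀ᶠ n in atTop,
      (0 ≤ s + t n ∧ s + t n ≤ d n) ∧ (0 ≤ u + t n ∧ u + t n ≤ d n) := by
    intro s u
    have h1 := htn.eventually_ge_atTop (max (-s) (-u))
    have h2 := hrn.eventually_ge_atTop (max s u)
    filter_upwards [h1, h2] with n hn1 hn2
    have := le_trans (le_max_left (-s) (-u)) hn1
    have := le_trans (le_max_right (-s) (-u)) hn1
    have := le_trans (le_max_left s u) hn2
    have := le_trans (le_max_right s u) hn2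
    constructor <;> constructor <;> linarith
  have hiso : Isometry γ := by
    apply Isometry.of_dist_eq
    intro s u
    have h1 : Tendsto (fun n => dist (g n s) (g n u)) (𝒰 : Filter ℕ)
        (𝓝 (dist (γ s) (γ u))) := (hγ s).dist (hγ u)
    have h2 : ∀ᶠ n in (𝒰 : Filter ℕ), dist (g n s) (g n u) = |s - u| := by
      refine h𝒰 ((hev s u).mono fun n hn => ?_)
      rw [hgid n s hn.1.1 hn.1.2, hgid n u hn.2.1 hn.2.2,
        hdistf n _ ⟨hn.1.1, hn.1.2⟩ _ ⟨hn.2.1, hn.2.2⟩]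
      ring_nf
    have h3 : Tendsto (fun n => dist (g n s) (g n u)) (𝒰 : Filter ℕ) (𝓝 |s - u|) :=
      tendsto_const_nhds.congr' (h2.mono fun n hn => hn.symm)
    rw [Real.dist_eq]
    exact tendsto_nhds_unique h1 h3
  have hγ0 : dist (γ 0) x₀ ≤ C := by
    have hmem : ∀ n, g n 0 ∈ Metric.closedBall x₀ C := by
      intro n; rw [hg0 n]; exact Metric.mem_closedBall.mpr (htB n)
    exact Metric.isClosed_closedBall.mem_of_tendsto (hγ 0) (Filter.univ_mem' hmem)
  -- distance from γ(s) to basepoint grows linearly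
  have hγdist : ∀ s : ℝ, |s| - C ≤ dist (γ s) x₀ := by
    intro s
    have h1 : dist (γ s) (γ 0) = |s| := by
      have := hiso.dist_eq s 0
      rwa [Real.dist_eq, sub_zero] at this
    have h2 := dist_triangle (γ s) x₀ (γ 0)
    rw [dist_comm x₀ (γ 0)] at h2
    linarith [h1, h2, hγ0]
  -- FORWARD LIMIT
  have key_fwd : Tendsto (fun s => ι (γ s)) atTop (𝓝 ξ) := by
    apply tendsto_of_forall_clusterPt
    intro ζ hcl
    by_contra hζξ
    have hmc : MapClusterPt ζ atTop (fun s => ι (γ s)) := hcl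
    obtain ⟨sq, hsq1, hsq2⟩ := seq_of_mapClusterPt hmc
    have hsq0 : ∀ k, (0:ℝ) ≤ sq k := fun k => le_trans (Nat.cast_nonneg k) (hsq1 k)
    -- ζ is a boundary point
    have hγseqesc : Tendsto (fun k => dist (γ (sq k)) x₀) atTop atTop := by
      refine tendsto_atTop_mono (fun k => ?_)
        (tendsto_atTop_add_const_right _ (-C) tendsto_natCast_atTop_atTop)
      have := hγdist (sq k)
      rw [abs_of_nonneg (hsq0 k)] at this
      linarith [hsq1 k]
    have hζb : ζ ∉ Set.range ι := notin_range_of_escape hemb x₀ hsq2 hγseqesc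
    -- select approximating geodesics
    have hsel : ∀ k : ℕ, ∃ n, k ≤ n ∧ sq k ≤ d n - t n ∧
        dist (ι (g n (sq k))) (ι (γ (sq k))) < 1 / (k + 1) := by
      intro k
      have h1 : ∀ᶠ n in (𝒰 : Filter ℕ), k ≤ n := h𝒰 (eventually_ge_atTop k)
      have h2 : ∀ᶠ n in (𝒰 : Filter ℕ), sq k ≤ d n - t n :=
        h𝒰 (hrn.eventually_ge_atTop _)
      have h3 : Tendsto (fun n => ι (g n (sq k))) (𝒰 : Filter ℕ) (𝓝 (ι (γ (sq k)))) :=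
        ((hemb.continuous.tendsto _).comp (hγ (sq k)))
      have h4 : ∀ᶠ n in (𝒰 : Filter ℕ),
          dist (ι (g n (sq k))) (ι (γ (sq k))) < 1 / (k + 1) :=
        Metric.tendsto_nhds.mp h3 _ (by positivity)
      obtain ⟨n, hn⟩ := ((h1.and h2).and h4).exists
      exact ⟨n, hn.1.1, hn.1.2, hn.2⟩
    choose nk hnk1 hnk2 hnk3 using hsel
    -- the points p k on the geodesics
    set p : ℕ → X := fun k => f (nk k) (sq k + t (nk k)) with hp
    have hparam : ∀ k, 0 ≤ sq k + t (nk k) ∧ sq k + t (nk k) ≤ d (nk k) := fun k =>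
      ⟨add_nonneg (hsq0 k) (htmem (nk k)).1, by linarith [hnk2 k]⟩
    have hpg : ∀ k, g (nk k) (sq k) = p k := fun k =>
      hgid (nk k) (sq k) (hparam k).1 (hparam k).2
    have hpζ : Tendsto (fun k => ι (p k)) atTop (𝓝 ζ) := by
      rw [tendsto_iff_dist_tendsto_zero]
      have hle : ∀ k, dist (ι (p k)) ζ ≤ 1 / (k + 1) + dist (ι (γ (sq k))) ζ := by
        intro k
        have := dist_triangle (ι (p k)) (ι (γ (sq k))) ζ
        have h5 := hnk3 k
        rw [hpg k] at h5
        linarith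
      refine squeeze_zero (fun k => dist_nonneg) hle ?_
      have := tendsto_one_div_add_atTop_nhds_zero_nat.add
        (tendsto_iff_dist_tendsto_zero.mp hsq2)
      simpa using this
    -- the tail geodesic segments
    have hDk : ∀ k, dist (p k) (b (nk k)) = d (nk k) - t (nk k) - sq k := by
      intro k
      have h1 : dist (f (nk k) (sq k + t (nk k))) (f (nk k) (d (nk k))) =
          |sq k + t (nk k) - d (nk k)| :=
        hdistf (nk k) _ ⟨(hparam k).1, (hparam k).2⟩ _ ⟨hd0 _, le_refl _⟩
      rw [hfd (nk k)] at h1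
      rw [hp]
      rw [h1, abs_of_nonpos (by linarith [(hparam k).2])]
      ring
    have hgeod : ∀ k, IsGeodesicFrom (fun u => f (nk k) (u + (sq k + t (nk k))))
        (p k) (b (nk k)) := by
      intro k
      refine ⟨?_, ?_, ?_⟩
      · show f (nk k) (0 + (sq k + t (nk k))) = p k
        rw [zero_add, hp]
      · show f (nk k) (dist (p k) (b (nk k)) + (sq k + t (nk k))) = b (nk k)
        rw [hDk k, show d (nk k) - t (nk k) - sq k + (sq k + t (nk k)) = d (nk k) by ring,
          hfd (nk k)]
      · intro s hs u hu
        rw [hDk k] at hs hu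
        show dist (f (nk k) (s + (sq k + t (nk k)))) (f (nk k) (u + (sq k + t (nk k)))) = |s - u|
        have hsm : s + (sq k + t (nk k)) ∈ Set.Icc (0:ℝ) (d (nk k)) :=
          ⟨by linarith [hs.1, (hparam k).1], by linarith [hs.2]⟩
        have hum : u + (sq k + t (nk k)) ∈ Set.Icc (0:ℝ) (d (nk k)) :=
          ⟨by linarith [hu.1, (hparam k).1], by linarith [hu.2]⟩
        rw [hdistf (nk k) _ hsm _ hum]
        ring_nf
    have hnkT : Tendsto nk atTop atTop := tendsto_atTop_mono hnk1 tendsto_id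
    have hbζ : Tendsto (fun k => ι (b (nk k))) atTop (𝓝 ξ) := hbT.comp hnkT
    obtain ⟨B', hB'b, hB't⟩ := hsv ξ ζ hξ hζb (Ne.symm hζξ) p (fun k => b (nk k))
      (fun k u => f (nk k) (u + (sq k + t (nk k)))) hgeod hpζ hbζ
    obtain ⟨C', hC'⟩ := hB'b.subset_closedBall x₀
    obtain ⟨K, hK⟩ := exists_nat_gt (C + C')
    obtain ⟨u, hu, huB⟩ := hB't K
    rw [hDk K] at hu
    have h6 : dist (f (nk K) (u + (sq K + t (nk K)))) (f (nk K) (t (nk K))) =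
        |u + (sq K + t (nk K)) - t (nk K)| := by
      refine hdistf (nk K) _ ⟨?_, ?_⟩ _ (htmem (nk K))
      · linarith [hu.1, (hparam K).1]
      · linarith [hu.2]
    rw [show u + (sq K + t (nk K)) - t (nk K) = u + sq K by ring,
      abs_of_nonneg (by linarith [hu.1, hsq0 K])] at h6
    have h7 : dist (f (nk K) (u + (sq K + t (nk K)))) (f (nk K) (t (nk K))) ≤ C' + C := by
      calc dist (f (nk K) (u + (sq K + t (nk K)))) (f (nk K) (t (nk K)))
          ≤ dist (f (nk K) (u + (sq K + t (nk K)))) x₀ + dist x₀ (f (nk K) (t (nk K))) :=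
            dist_triangle _ _ _
        _ ≤ C' + C := by
            have := hC' huB
            rw [Metric.mem_closedBall] at this
            rw [dist_comm x₀]
            exact add_le_add this (htB (nk K))
    rw [h6] at h7
    have := hsq1 K
    linarith [hu.1]
  -- BACKWARD LIMIT
  have key_bwd : Tendsto (fun s => ι (γ s)) atBot (𝓝 η) := by
    apply tendsto_of_forall_clusterPt
    intro ζ hcl
    by_contra hζη
    have hmc : MapClusterPt ζ atTop (fun s => ι (γ (-s))) := by
      show ClusterPt ζ (map (fun s => ι (γ (-s))) atTop)
      have : map (fun s : ℝ => ι (γ (-s))) atTop = map (fun s => ι (γ s)) atBot := by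
        rw [← Filter.map_neg_atTop, Filter.map_map]
        rfl
      rwa [this]
    obtain ⟨sq, hsq1, hsq2⟩ := seq_of_mapClusterPt hmc
    have hsq0 : ∀ k, (0:ℝ) ≤ sq k := fun k => le_trans (Nat.cast_nonneg k) (hsq1 k)
    have hγseqesc : Tendsto (fun k => dist (γ (-sq k)) x₀) atTop atTop := by
      refine tendsto_atTop_mono (fun k => ?_)
        (tendsto_atTop_add_const_right _ (-C) tendsto_natCast_atTop_atTop)
      have := hγdist (-sq k)
      rw [abs_neg, abs_of_nonneg (hsq0 k)] at this
      linarith [hsq1 k]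
    have hζb : ζ ∉ Set.range ι := notin_range_of_escape hemb x₀ hsq2 hγseqesc
    have hsel : ∀ k : ℕ, ∃ n, k ≤ n ∧ sq k ≤ t n ∧
        dist (ι (g n (-sq k))) (ι (γ (-sq k))) < 1 / (k + 1) := by
      intro k
      have h1 : ∀ᶠ n in (𝒰 : Filter ℕ), k ≤ n := h𝒰 (eventually_ge_atTop k)
      have h2 : ∀ᶠ n in (𝒰 : Filter ℕ), sq k ≤ t n := h𝒰 (htn.eventually_ge_atTop _)
      have h3 : Tendsto (fun n => ι (g n (-sq k))) (𝒰 : Filter ℕ) (𝓝 (ι (γ (-sq k)))) :=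
        ((hemb.continuous.tendsto _).comp (hγ (-sq k)))
      have h4 : ∀ᶠ n in (𝒰 : Filter ℕ),
          dist (ι (g n (-sq k))) (ι (γ (-sq k))) < 1 / (k + 1) :=
        Metric.tendsto_nhds.mp h3 _ (by positivity)
      obtain ⟨n, hn⟩ := ((h1.and h2).and h4).exists
      exact ⟨n, hn.1.1, hn.1.2, hn.2⟩
    choose nk hnk1 hnk2 hnk3 using hsel
    set q : ℕ → X := fun k => f (nk k) (-sq k + t (nk k)) with hq
    have hparam : ∀ k, 0 ≤ -sq k + t (nk k) ∧ -sq k + t (nk k) ≤ d (nk k) := fun k =>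
      ⟨by linarith [hnk2 k], by linarith [(htmem (nk k)).2, hsq0 k]⟩
    have hqg : ∀ k, g (nk k) (-sq k) = q k := fun k =>
      hgid (nk k) (-sq k) (hparam k).1 (hparam k).2
    have hqζ : Tendsto (fun k => ι (q k)) atTop (𝓝 ζ) := by
      rw [tendsto_iff_dist_tendsto_zero]
      have hle : ∀ k, dist (ι (q k)) ζ ≤ 1 / (k + 1) + dist (ι (γ (-sq k))) ζ := by
        intro k
        have := dist_triangle (ι (q k)) (ι (γ (-sq k))) ζ
        have h5 := hnk3 k
        rw [hqg k] at h5
        linarith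
      refine squeeze_zero (fun k => dist_nonneg) hle ?_
      have := tendsto_one_div_add_atTop_nhds_zero_nat.add
        (tendsto_iff_dist_tendsto_zero.mp hsq2)
      simpa using this
    have hDk : ∀ k, dist (a (nk k)) (q k) = -sq k + t (nk k) := by
      intro k
      have h1 : dist (f (nk k) 0) (f (nk k) (-sq k + t (nk k))) = |0 - (-sq k + t (nk k))| :=
        hdistf (nk k) 0 ⟨le_refl _, hd0 _⟩ _ ⟨(hparam k).1, (hparam k).2⟩
      rw [hf0 (nk k), zero_sub, abs_neg, abs_of_nonneg (hparam k).1] at h1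
      exact h1
    have hgeod : ∀ k, IsGeodesicFrom (f (nk k)) (a (nk k)) (q k) := by
      intro k
      refine ⟨hf0 (nk k), by rw [hDk k], ?_⟩
      intro s hs u hu
      rw [hDk k] at hs hu
      have hsm : s ∈ Set.Icc (0:ℝ) (d (nk k)) := ⟨hs.1, le_trans hs.2 (hparam k).2⟩
      have hum : u ∈ Set.Icc (0:ℝ) (d (nk k)) := ⟨hu.1, le_trans hu.2 (hparam k).2⟩
      exact hdistf (nk k) _ hsm _ hum
    have hnkT : Tendsto nk atTop atTop := tendsto_atTop_mono hnk1 tendsto_id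
    have haζ : Tendsto (fun k => ι (a (nk k))) atTop (𝓝 η) := haT.comp hnkT
    obtain ⟨B', hB'b, hB't⟩ := hsv ζ η hζb hη (fun h => hζη h) (fun k => a (nk k)) q
      (fun k => f (nk k)) hgeod haζ hqζ
    obtain ⟨C', hC'⟩ := hB'b.subset_closedBall x₀
    obtain ⟨K, hK⟩ := exists_nat_gt (C + C')
    obtain ⟨u, hu, huB⟩ := hB't K
    rw [hDk K] at hu
    have hum : u ∈ Set.Icc (0:ℝ) (d (nk K)) := ⟨hu.1, le_trans hu.2 (hparam K).2⟩
    have h6 : dist (f (nk K) u) (f (nk K) (t (nk K))) = |u - t (nk K)| :=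
      hdistf (nk K) _ hum _ (htmem (nk K))
    rw [abs_of_nonpos (by linarith [hu.2, hsq0 K] : u - t (nk K) ≤ 0)] at h6
    have h7 : dist (f (nk K) u) (f (nk K) (t (nk K))) ≤ C' + C := by
      calc dist (f (nk K) u) (f (nk K) (t (nk K)))
          ≤ dist (f (nk K) u) x₀ + dist x₀ (f (nk K) (t (nk K))) := dist_triangle _ _ _
        _ ≤ C' + C := by
            have := hC' huB
            rw [Metric.mem_closedBall] at this
            rw [dist_comm x₀]
            exact add_le_add this (htB (nk K))
    rw [h6] at h7
    have := hsq1 K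
    linarith [hu.2]
  exact ⟨γ, hiso, key_fwd, key_bwd⟩
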